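/- Let G be a finite simple graph with n ≥ 4 vertices and let H = H(G) be the graph obtained from G by one step of the half-model. Then H is connected (regardless of whether G is connected). -/

import Mathlib

open SimpleGraph

/-- The set of "clones": one new vertex for each subset of `V` of size `⌊|V|/2⌋`. -/
abbrev halfClones (V : Type) [Fintype V] [DecidableEq V] : Type :=
  {S : Finset V // S.card = Fintype.card V / 2}

/-- One step of the half-model: old vertices keep their adjacencies; the clone `v_S`
is adjacent exactly to the members of `S`; clones form an independent set. -/
def halfStep {V : Type} [Fintype V] [DecidableEq V] (G : SimpleGraph V) :
    SimpleGraph (V ⊕ halfClones V) where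
  Adj x y :=
    match x, y with
    | Sum.inl u, Sum.inl v => G.Adj u v
    | Sum.inl u, Sum.inr S => u ∈ S.1
    | Sum.inr S, Sum.inl u => u ∈ S.1
    | Sum.inr _, Sum.inr _ => False
  symm := by
    refine ⟨?_⟩
    rintro (u | S) (v | T) h
    · exact G.adj_symm h
    · exact h
    · exact h
    · exact h.elim
  loopless := by
    refine ⟨?_⟩
    rintro (u | S) h
    · exact G.irrefl h
    · exact h.elim

instance halfStep.instDecidableRelAdj {V : Type} [Fintype V] [DecidableEq V]
    (G : SimpleGraph V) [DecidableRel G.Adj] : DecidableRel (halfStep G).Adj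
  | Sum.inl u, Sum.inl v => inferInstanceAs (Decidable (G.Adj u v))
  | Sum.inl u, Sum.inr S => inferInstanceAs (Decidable (u ∈ S.1))
  | Sum.inr S, Sum.inl u => inferInstanceAs (Decidable (u ∈ S.1))
  | Sum.inr _, Sum.inr _ => inferInstanceAs (Decidable False)

/-- if `G` has at least `4` vertices, then one step of the half-model
produces a connected graph (regardless of whether `G` is connected). -/
theorem stmt_5 {V : Type} [Fintype V] [DecidableEq V] (G : SimpleGraph V)
    (hn : 4 ≤ Fintype.card V) :
    (halfStep G).Connected := by
  have h2 : 2 ≤ Fintype.card V / 2 := by omega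
  -- any two old vertices lie in a common clone set
  have key : ∀ u v : V, ∃ S : halfClones V, u ∈ S.1 ∧ v ∈ S.1 := by
    intro u v
    obtain ⟨S, hsub, hcard⟩ := Finset.exists_superset_card_eq
      (s := ({u, v} : Finset V)) (n := Fintype.card V / 2)
      (le_trans (le_trans (Finset.card_insert_le _ _)
        (by simp [Finset.card_singleton])) h2)
      (le_trans (Nat.div_le_self _ _) (by simp [Finset.card_le_univ]))
    exact ⟨⟨S, hcard⟩, hsub (by simp), hsub (by simp)⟩
  have reach_old : ∀ u v : V, (halfStep G).Reachable (Sum.inl u) (Sum.inl v) := by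
    intro u v
    obtain ⟨S, hu, hv⟩ := key u v
    exact (Adj.reachable (show (halfStep G).Adj (Sum.inl u) (Sum.inr S) from hu)).trans
      (Adj.reachable (show (halfStep G).Adj (Sum.inr S) (Sum.inl v) from hv))
  have reach_clone : ∀ S : halfClones V, ∃ u : V,
      (halfStep G).Reachable (Sum.inr S) (Sum.inl u) := by
    intro S
    have : S.1.Nonempty := Finset.card_pos.mp (by omega)
    obtain ⟨u, hu⟩ := this
    exact ⟨u, Adj.reachable (show (halfStep G).Adj (Sum.inr S) (Sum.inl u) from hu)⟩
  have hne : Nonempty V := Fintype.card_pos_iff.mp (by omega)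
  have : Nonempty (V ⊕ halfClones V) := ⟨Sum.inl hne.some⟩
  constructor
  · rintro (u | S) (v | T)
    · exact reach_old u v
    · obtain ⟨w, hw⟩ := reach_clone T
      exact (reach_old u w).trans hw.symm
    · obtain ⟨w, hw⟩ := reach_clone S
      exact hw.trans (reach_old w v)
    · obtain ⟨w, hw⟩ := reach_clone S
      obtain ⟨w', hw'⟩ := reach_clone T
      exact hw.trans ((reach_old w w').trans hw'.symm)
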